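/- Let (L_n) be a sequence of measurable, bounded below, lower semicontinuous, coercive functions Θ → ℝ, let L : Θ → ℝ be lower semicontinuous with L_n(θ) → L(θ) for every θ ∈ Θ and inf_Θ L ≥ limsup_n inf_Θ L_n > −∞. For each n let P_n^⋆ ∈ 𝒫(Θ) be a minimiser of J_{L_n} over 𝒫(Θ). If A ⊆ Θ is measurable with inf_A L > inf_Θ L and liminf_n inf_A L_n > inf_Θ L, then P_n^⋆(A) → 0 as n → ∞ (indeed P_n^⋆(A) = 0 for all n sufficiently large). -/

import Mathlib

open MeasureTheory Filter Topology
open scoped ENNReal NNReal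

/-- The loss functional `J_f(ν) := ∫ f dν`, valued in the extended reals; for `f`
bounded below it takes values in `(-∞, ∞]`. -/
noncomputable def J {Θ : Type*} [MeasurableSpace Θ] (f : Θ → ℝ) (ν : Measure Θ) : EReal :=
  ((∫⁻ θ, ENNReal.ofReal (f θ) ∂ν : ℝ≥0∞) : EReal) -
    ((∫⁻ θ, ENNReal.ofReal (-f θ) ∂ν : ℝ≥0∞) : EReal)

/-- The GVI objective `T n β L D Π Q := n · J_L(Q) + (1/β) · D(Q, Π)`. -/
noncomputable def T {Θ : Type*} [MeasurableSpace Θ] (n : ℕ) (β : ℝ) (L : Θ → ℝ)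
    (D : ProbabilityMeasure Θ → ProbabilityMeasure Θ → ℝ)
    (prior Q : ProbabilityMeasure Θ) : EReal :=
  ((n : ℝ) : EReal) * J L (Q : Measure Θ) + ((1 / β * D Q prior : ℝ) : EReal)

/-- `f : Θ → ℝ` is coercive if for every `c` there is a compact set outside of which `f > c`. -/
def Coercive {Θ : Type*} [TopologicalSpace Θ] (f : Θ → ℝ) : Prop :=
  ∀ c : ℝ, ∃ K : Set Θ, IsCompact K ∧ ∀ θ ∉ K, c < f θ

/-- The mixture `a·μ + (1−a)·ν` of two probability measures. -/
noncomputable def mix {Θ : Type*} [MeasurableSpace Θ] (μ ν : ProbabilityMeasure Θ) (a : ℝ)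
    (ha0 : 0 ≤ a) (ha1 : a ≤ 1) : ProbabilityMeasure Θ :=
  ⟨ENNReal.ofReal a • (μ : Measure Θ) + ENNReal.ofReal (1 - a) • (ν : Measure Θ), by
    constructor
    simp only [Measure.coe_add, Pi.add_apply, Measure.smul_apply, smul_eq_mul, measure_univ,
      mul_one]
    rw [← ENNReal.ofReal_add ha0 (by linarith)]
    norm_num⟩

/-- The Dirac probability measure at `θ`. -/
noncomputable def diracProb {Θ : Type*} [MeasurableSpace Θ] (θ : Θ) : ProbabilityMeasure Θ :=
  ⟨Measure.dirac θ, inferInstance⟩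

/-- `𝒬` allows for Dirac measures: it is weak*-closed and the infimum of `J_f` over `𝒬`
equals the infimum of `f` over `Θ`, for every bounded below, lsc, coercive `f`. -/
def AllowsDiracs {Θ : Type*} [MeasurableSpace Θ] [TopologicalSpace Θ] [OpensMeasurableSpace Θ]
    (𝒬 : Set (ProbabilityMeasure Θ)) : Prop :=
  IsClosed 𝒬 ∧ ∀ f : Θ → ℝ, (∃ b, ∀ θ, b ≤ f θ) → LowerSemicontinuous f → Coercive f →
    (⨅ ν : 𝒬, J f (ν.1 : Measure Θ)) = ((⨅ θ, f θ : ℝ) : EReal)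

lemma J_dirac {Θ : Type*} [MeasurableSpace Θ] (f : Θ → ℝ) (hf : Measurable f) (θ : Θ) :
    J f (diracProb θ : Measure Θ) = (f θ : EReal) := by
  have h1 : (∫⁻ x, ENNReal.ofReal (f x) ∂(Measure.dirac θ)) = ENNReal.ofReal (f θ) :=
    lintegral_dirac' θ (hf.ennreal_ofReal)
  have h2 : (∫⁻ x, ENNReal.ofReal (-f x) ∂(Measure.dirac θ)) = ENNReal.ofReal (-f θ) :=
    lintegral_dirac' θ (hf.neg.ennreal_ofReal)
  have hd : ((diracProb θ : ProbabilityMeasure Θ) : Measure Θ) = Measure.dirac θ := rfl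
  rw [J, hd, h1, h2]
  rw [EReal.coe_ennreal_ofReal, EReal.coe_ennreal_ofReal]
  rcases le_total 0 (f θ) with h | h
  · rw [max_eq_left h, max_eq_right (by linarith)]
    rw [← EReal.coe_sub]; norm_num
  · rw [max_eq_right h, max_eq_left (by linarith)]
    rw [← EReal.coe_sub]; norm_num

lemma measure_zero_of_min {Θ : Type*} [MeasurableSpace Θ] [Nonempty Θ]
    (f : Θ → ℝ) (hf : Measurable f) (b : ℝ) (hb : ∀ θ, b ≤ f θ)
    (P : ProbabilityMeasure Θ) (hmin : ∀ θ, J f (P : Measure Θ) ≤ (f θ : EReal))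
    (A : Set Θ) (hA : MeasurableSet A) (hAne : A.Nonempty)
    (hgap : (⨅ θ, f θ) < ⨅ θ : A, f θ) : P A = 0 := by
  haveI : Nonempty A := hAne.to_subtype
  set μ : Measure Θ := (P : Measure Θ) with hμ
  have hbdd : BddBelow (Set.range f) := ⟨b, by rintro _ ⟨θ, rfl⟩; exact hb θ⟩
  have hbddA : BddBelow (Set.range fun θ : A => f θ) := ⟨b, by rintro _ ⟨θ, rfl⟩; exact hb θ⟩
  set m := ⨅ θ, f θ with hm
  set a := ⨅ θ : A, f θ with ha
  -- the negative part of the lintegral is finite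
  have hneg : (∫⁻ θ, ENNReal.ofReal (-f θ) ∂μ) ≤ ENNReal.ofReal (-b) := by
    calc (∫⁻ θ, ENNReal.ofReal (-f θ) ∂μ) ≤ ∫⁻ _, ENNReal.ofReal (-b) ∂μ :=
          lintegral_mono fun θ => ENNReal.ofReal_le_ofReal (by linarith [hb θ])
      _ = ENNReal.ofReal (-b) := by simp [hμ]
  have hnegne : (∫⁻ θ, ENNReal.ofReal (-f θ) ∂μ) ≠ ⊤ :=
    (lt_of_le_of_lt hneg ENNReal.ofReal_lt_top).ne
  -- the positive part is finite too
  obtain ⟨θ₀, hθ₀⟩ := hAne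
  have hposne : (∫⁻ θ, ENNReal.ofReal (f θ) ∂μ) ≠ ⊤ := by
    intro htop
    have : J f μ = ⊤ := by
      rw [J, htop]
      have h1 : ((∫⁻ θ, ENNReal.ofReal (-f θ) ∂μ : ℝ≥0∞) : EReal) =
          (((∫⁻ θ, ENNReal.ofReal (-f θ) ∂μ : ℝ≥0∞).toReal : ℝ) : EReal) := by
        rw [← EReal.toReal_coe_ennreal]
        exact (EReal.coe_toReal (by simpa using hnegne) (EReal.coe_ennreal_ne_bot _)).symm
      rw [EReal.coe_ennreal_top, h1, EReal.top_sub_coe]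
    have h2 := hmin θ₀
    rw [this] at h2
    exact absurd h2 (by simp)
  -- f is integrable
  have hint : Integrable f μ := by
    refine ⟨hf.aestronglyMeasurable, ?_⟩
    rw [hasFiniteIntegral_iff_norm]
    have hle : ∀ θ, ENNReal.ofReal ‖f θ‖ ≤
        ENNReal.ofReal (f θ) + ENNReal.ofReal (-f θ) := by
      intro θ
      rcases le_total 0 (f θ) with h | h
      · rw [Real.norm_eq_abs, abs_of_nonneg h]; exact le_self_add
      · rw [Real.norm_eq_abs, abs_of_nonpos h]; exact le_add_self
    calc (∫⁻ θ, ENNReal.ofReal ‖f θ‖ ∂μ)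
        ≤ ∫⁻ θ, (ENNReal.ofReal (f θ) + ENNReal.ofReal (-f θ)) ∂μ := lintegral_mono hle
      _ = (∫⁻ θ, ENNReal.ofReal (f θ) ∂μ) + ∫⁻ θ, ENNReal.ofReal (-f θ) ∂μ :=
          lintegral_add_left hf.ennreal_ofReal _
      _ < ⊤ := ENNReal.add_lt_top.mpr ⟨hposne.lt_top, hnegne.lt_top⟩
  -- J equals the Bochner integral
  have hJ : J f μ = ((∫ θ, f θ ∂μ : ℝ) : EReal) := by
    rw [integral_eq_lintegral_pos_part_sub_lintegral_neg_part hint, EReal.coe_sub, J]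
    congr 1
    · rw [← EReal.toReal_coe_ennreal]
      exact (EReal.coe_toReal (by simpa using hposne) (EReal.coe_ennreal_ne_bot _)).symm
    · rw [← EReal.toReal_coe_ennreal]
      exact (EReal.coe_toReal (by simpa using hnegne) (EReal.coe_ennreal_ne_bot _)).symm
  -- lower bound for the integral
  set p := (μ A).toReal with hp
  have hg : ∀ θ, m + (a - m) * A.indicator (fun _ => (1:ℝ)) θ ≤ f θ := by
    intro θ
    by_cases hθ : θ ∈ A
    · rw [Set.indicator_of_mem hθ]
      have : a ≤ f θ := ciInf_le hbddA ⟨θ, hθ⟩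
      linarith
    · rw [Set.indicator_of_notMem hθ]
      have : m ≤ f θ := ciInf_le hbdd θ
      linarith
  have hgint : Integrable (fun θ => m + (a - m) * A.indicator (fun _ => (1:ℝ)) θ) μ :=
    (integrable_const m).add (((integrable_const (1:ℝ)).indicator hA).const_mul _)
  have hlow : m + (a - m) * p ≤ ∫ θ, f θ ∂μ := by
    have h1 : (∫ θ, (m + (a - m) * A.indicator (fun _ => (1:ℝ)) θ) ∂μ)
        = m + (a - m) * p := by
      rw [integral_add (integrable_const m)
        (((integrable_const (1:ℝ)).indicator hA).const_mul _),
        integral_const, integral_const_mul]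
      have : (∫ θ, A.indicator (fun _ => (1:ℝ)) θ ∂μ) = p := by
        rw [hp]; exact integral_indicator_one hA
      simp [this]
    rw [← h1]
    exact integral_mono hgint hint hg
  -- upper bound: for every ε there is θ with f θ small
  have hup : ∀ θ, (∫ θ, f θ ∂μ) ≤ f θ := by
    intro θ
    have := hmin θ
    rw [hJ] at this
    exact_mod_cast this
  -- conclude p = 0
  have hp0 : p ≤ 0 := by
    by_contra hcon
    push_neg at hcon
    have hlt : m < m + (a - m) * p := by nlinarith
    obtain ⟨θ₁, hθ₁⟩ := exists_lt_of_ciInf_lt (by rw [← hm]; exact hlt)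
    have := hup θ₁
    linarith
  have hμA : μ A = 0 := by
    have hfin : μ A ≠ ⊤ := (measure_lt_top μ A).ne
    have := ENNReal.toReal_nonneg (a := μ A)
    have : (μ A).toReal = 0 := le_antisymm hp0 ENNReal.toReal_nonneg
    exact (ENNReal.toReal_eq_zero_iff _).mp this |>.resolve_right hfin
  have : (P A : ℝ≥0∞) = 0 := by
    rw [ProbabilityMeasure.ennreal_coeFn_eq_coeFn_toMeasure]; exact hμA
  exact_mod_cast this

/-- If the losses `L n` converge pointwise to a lsc limit `L∞` with
`inf_Θ L∞ ≥ limsup_n inf_Θ L_n > −∞`, and `P⋆ n` minimises `J_{L_n}` over `𝒫(Θ)`, then for any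
measurable `A` with `inf_A L∞ > inf_Θ L∞` and `liminf_n inf_A L_n > inf_Θ L∞`, one has
`P⋆ n (A) → 0`, and indeed `P⋆ n (A) = 0` for all `n` large enough. -/
theorem empirical_minimisers_concentrate {Θ : Type*} [TopologicalSpace Θ] [PolishSpace Θ]
    [MeasurableSpace Θ] [BorelSpace Θ] [Nonempty Θ]
    (L : ℕ → Θ → ℝ) (Llim : Θ → ℝ)
    (hmeas : ∀ n, Measurable (L n)) (hbdd : ∀ n, ∃ b : ℝ, ∀ θ, b ≤ L n θ)
    (hlsc : ∀ n, LowerSemicontinuous (L n)) (hcoer : ∀ n, Coercive (L n))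
    (hLlimlsc : LowerSemicontinuous Llim)
    (hconv : ∀ θ : Θ, Tendsto (fun n => L n θ) atTop (nhds (Llim θ)))
    (hinf1 : Filter.limsup (fun n => ((⨅ θ : Θ, L n θ : ℝ) : EReal)) atTop ≤
      ((⨅ θ : Θ, Llim θ : ℝ) : EReal))
    (hinf2 : (⊥ : EReal) < Filter.limsup (fun n => ((⨅ θ : Θ, L n θ : ℝ) : EReal)) atTop)
    (Pstar : ℕ → ProbabilityMeasure Θ)
    (hPstar : ∀ n, ∀ μ : ProbabilityMeasure Θ,
      J (L n) (Pstar n : Measure Θ) ≤ J (L n) (μ : Measure Θ))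
    (A : Set Θ) (hA : MeasurableSet A)
    (hAinf : (⨅ θ : Θ, Llim θ) < ⨅ θ : A, Llim (θ : Θ))
    (hAliminf : ((⨅ θ : Θ, Llim θ : ℝ) : EReal) <
      Filter.liminf (fun n => ((⨅ θ : A, L n (θ : Θ) : ℝ) : EReal)) atTop) :
    Tendsto (fun n => ((Pstar n) A : ℝ)) atTop (nhds 0) ∧
      ∀ᶠ n in atTop, (Pstar n) A = 0 := by
  have hev : ∀ᶠ n in atTop, (Pstar n) A = 0 := by
    rcases A.eq_empty_or_nonempty with rfl | hAne
    · filter_upwards with n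
      simp
    · -- eventually inf_Θ L n < inf_A L n
      obtain ⟨c, hc1, hc2⟩ := EReal.exists_between_coe_real hAliminf
      have h1 : ∀ᶠ n in atTop, ((⨅ θ : Θ, L n θ : ℝ) : EReal) < (c : EReal) :=
        eventually_lt_of_limsup_lt (lt_of_le_of_lt hinf1 hc1)
      have h2 : ∀ᶠ n in atTop, (c : EReal) < ((⨅ θ : A, L n (θ : Θ) : ℝ) : EReal) :=
        eventually_lt_of_lt_liminf hc2
      filter_upwards [h1, h2] with n hn1 hn2
      have hgap : (⨅ θ : Θ, L n θ) < ⨅ θ : A, L n (θ : Θ) := by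
        exact_mod_cast hn1.trans hn2
      obtain ⟨b, hb⟩ := hbdd n
      refine measure_zero_of_min (L n) (hmeas n) b hb (Pstar n) ?_ A hA hAne hgap
      intro θ
      calc J (L n) ((Pstar n : Measure Θ)) ≤ J (L n) (diracProb θ : Measure Θ) :=
            hPstar n (diracProb θ)
        _ = (L n θ : EReal) := J_dirac (L n) (hmeas n) θ
  refine ⟨?_, hev⟩
  have : (fun n => ((Pstar n) A : ℝ)) =ᶠ[atTop] fun _ => (0:ℝ) := by
    filter_upwards [hev] with n hn
    simp [hn]
  exact Tendsto.congr' this.symm tendsto_const_nhds
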